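/- There exists a constant C > 0 such that for all x, y ∈ ℝ² with |x| > 1, |y| > 1, and x ≠ y: |K(x − y*) − K(x)| ≤ C/|x − y| and |K(x − y) − K(x − y*) + K(x)| ≤ C/|x − y|. -/

import Mathlib

open MeasureTheory

noncomputable section

abbrev E2 : Type := EuclideanSpace ℝ (Fin 2)

/-- The planar Biot–Savart kernel `K(z) = z⊥ / (2π|z|²)`, where `z⊥ = (-z₂, z₁)`.
(With the junk-value convention `(0 : ℝ)⁻¹ = 0`, this gives `K 0 = 0`.) -/
def K (z : E2) : E2 :=
  (2 * Real.pi * ‖z‖ ^ 2)⁻¹ • (WithLp.equiv 2 (Fin 2 → ℝ)).symm ![-(z 1), z 0]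

lemma norm_sq_E2 (v : E2) : ‖v‖ ^ 2 = v 0 ^ 2 + v 1 ^ 2 := by
  rw [EuclideanSpace.norm_eq, Real.sq_sqrt (by positivity)]
  simp [Fin.sum_univ_two]

lemma sq_eq_of_nonneg {a b : ℝ} (h1 : 0 ≤ a) (h2 : 0 ≤ b) (h : a ^ 2 = b ^ 2) : a = b := by
  nlinarith [sq_nonneg (a - b), sq_nonneg (a + b)]

lemma K_apply (z : E2) (i : Fin 2) :
    K z i = (2 * Real.pi * ‖z‖ ^ 2)⁻¹ * (![-(z 1), z 0] i) := by
  simp [K]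

lemma norm_K (z : E2) (hz : z ≠ 0) : ‖K z‖ = (2 * Real.pi * ‖z‖)⁻¹ := by
  have hz' : 0 < ‖z‖ := norm_pos_iff.mpr hz
  have hA : ‖z‖ ^ 2 = z 0 ^ 2 + z 1 ^ 2 := norm_sq_E2 z
  have hπ : (0:ℝ) < Real.pi := Real.pi_pos
  apply sq_eq_of_nonneg (norm_nonneg _) (by positivity)
  have h2 : z 0 ^ 2 + z 1 ^ 2 > 0 := by rw [← hA]; positivity
  rw [norm_sq_E2 (K z), K_apply, K_apply]
  simp only [Matrix.cons_val_zero, Matrix.cons_val_one, Matrix.head_cons]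
  rw [show (2 * Real.pi * ‖z‖)⁻¹ ^ 2 = (4 * Real.pi ^ 2 * ‖z‖ ^ 2)⁻¹ by
    rw [inv_pow]; congr 1; ring, hA]
  field_simp
  ring

lemma norm_K_sub (a b : E2) (ha : a ≠ 0) (hb : b ≠ 0) :
    ‖K a - K b‖ = ‖a - b‖ / (2 * Real.pi * ‖a‖ * ‖b‖) := by
  have ha' : 0 < ‖a‖ := norm_pos_iff.mpr ha
  have hb' : 0 < ‖b‖ := norm_pos_iff.mpr hb
  have hπ : (0:ℝ) < Real.pi := Real.pi_pos
  apply sq_eq_of_nonneg (norm_nonneg _) (by positivity)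
  have hA : ‖a‖ ^ 2 = a 0 ^ 2 + a 1 ^ 2 := norm_sq_E2 a
  have hB : ‖b‖ ^ 2 = b 0 ^ 2 + b 1 ^ 2 := norm_sq_E2 b
  have h2a : a 0 ^ 2 + a 1 ^ 2 > 0 := by rw [← hA]; positivity
  have h2b : b 0 ^ 2 + b 1 ^ 2 > 0 := by rw [← hB]; positivity
  have hs : ∀ i, (K a - K b) i = K a i - K b i := by intro i; simp
  rw [norm_sq_E2 (K a - K b), hs 0, hs 1, K_apply, K_apply, K_apply, K_apply]
  simp only [Matrix.cons_val_zero, Matrix.cons_val_one, Matrix.head_cons]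
  rw [div_pow, show (2 * Real.pi * ‖a‖ * ‖b‖) ^ 2
      = 4 * Real.pi ^ 2 * ‖a‖ ^ 2 * ‖b‖ ^ 2 by ring, hA, hB, norm_sq_E2 (a - b)]
  have hc : ∀ i, (a - b) i = a i - b i := by intro i; simp
  rw [hc 0, hc 1]
  field_simp
  ring

/-- Decay of the correction term `L(x,y) = K(x − y*) − K(x)` and of the hydrodynamic
Biot–Savart kernel `J(x,y) = K(x − y) − K(x − y*) + K(x)` for the exterior of the unit disk:
both are bounded by `C/|x − y|`. Here `y* = y/|y|²`. -/
theorem hydrodynamic_kernel_decay_bound :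
    ∃ C > 0, ∀ x y : E2, 1 < ‖x‖ → 1 < ‖y‖ → x ≠ y →
      ‖K (x - (‖y‖ ^ 2)⁻¹ • y) - K x‖ ≤ C / ‖x - y‖ ∧
      ‖K (x - y) - K (x - (‖y‖ ^ 2)⁻¹ • y) + K x‖ ≤ C / ‖x - y‖ := by
  refine ⟨1, one_pos, fun x y hx hy hxy => ?_⟩
  have hπ : (0:ℝ) < Real.pi := Real.pi_pos
  have hπ3 : (3:ℝ) < Real.pi := Real.pi_gt_three
  have hy0 : (0:ℝ) < ‖y‖ := lt_trans one_pos hy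
  have hx0 : (0:ℝ) < ‖x‖ := lt_trans one_pos hx
  have hxne : x ≠ 0 := by intro h; rw [h, norm_zero] at hx0; exact lt_irrefl 0 hx0
  have hxyne : x - y ≠ 0 := sub_ne_zero.mpr hxy
  have hxy0 : (0:ℝ) < ‖x - y‖ := norm_pos_iff.mpr hxyne
  set ys : E2 := (‖y‖ ^ 2)⁻¹ • y with hys
  -- key inequality : ‖x - y‖ ≤ ‖y‖ * ‖x - ys‖
  have hkey : ‖x - y‖ ≤ ‖y‖ * ‖x - ys‖ := by
    have h1 : (‖y‖ * ‖x - ys‖) ^ 2 - ‖x - y‖ ^ 2 = (‖x‖ ^ 2 - 1) * (‖y‖ ^ 2 - 1) := by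
      have hY : ‖y‖ ^ 2 = y 0 ^ 2 + y 1 ^ 2 := norm_sq_E2 y
      have hY0 : (0:ℝ) < y 0 ^ 2 + y 1 ^ 2 := by rw [← hY]; positivity
      have hc : ∀ i, (x - ys) i = x i - (y 0 ^ 2 + y 1 ^ 2)⁻¹ * y i := by
        intro i; simp [hys, hY]
      have e : (‖y‖ * ‖x - ys‖) ^ 2
          = (y 0 ^ 2 + y 1 ^ 2) * ((x - ys) 0 ^ 2 + (x - ys) 1 ^ 2) := by
        rw [show (‖y‖ * ‖x - ys‖) ^ 2 = ‖y‖ ^ 2 * ‖x - ys‖ ^ 2 by ring, hY, norm_sq_E2]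
      have hc2 : ∀ i, (x - y) i = x i - y i := by intro i; simp
      rw [e, hc 0, hc 1, norm_sq_E2 (x - y), norm_sq_E2 x, hY, hc2 0, hc2 1]
      field_simp
      ring
    have hx2 : (1:ℝ) ≤ ‖x‖ ^ 2 := by nlinarith
    have hy2 : (1:ℝ) ≤ ‖y‖ ^ 2 := by nlinarith
    have h0 : (0:ℝ) ≤ (‖x‖ ^ 2 - 1) * (‖y‖ ^ 2 - 1) :=
      mul_nonneg (by linarith) (by linarith)
    have hsq : ‖x - y‖ ^ 2 ≤ (‖y‖ * ‖x - ys‖) ^ 2 := by linarith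
    exact le_of_pow_le_pow_left₀ two_ne_zero (by positivity) hsq
  have hxysne : x - ys ≠ 0 := by
    intro h
    rw [h, norm_zero, mul_zero] at hkey
    exact absurd hkey (not_le.mpr hxy0)
  have hxys0 : (0:ℝ) < ‖x - ys‖ := norm_pos_iff.mpr hxysne
  have hk2 : ‖y‖⁻¹ * ‖x - y‖ ≤ ‖x - ys‖ := by
    rw [inv_mul_le_iff₀ hy0]; exact hkey
  -- norm of ys
  have hnys : ‖(x - ys) - x‖ = ‖y‖⁻¹ := by
    rw [sub_sub_cancel_left, norm_neg, hys, norm_smul, Real.norm_eq_abs,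
      abs_of_nonneg (by positivity), sq]
    field_simp
  -- first bound, sharp form
  have h1 : ‖K (x - ys) - K x‖ ≤ (2 * Real.pi * ‖x - y‖)⁻¹ := by
    rw [norm_K_sub _ _ hxysne hxne, show ‖x - ys - x‖ / (2 * Real.pi * ‖x - ys‖ * ‖x‖)
        = (‖y‖ * (2 * Real.pi * ‖x - ys‖ * ‖x‖))⁻¹ by rw [hnys]; field_simp]
    apply inv_anti₀ (by positivity)
    nlinarith [mul_le_mul_of_nonneg_left hkey (by positivity : (0:ℝ) ≤ 2 * Real.pi),
      mul_pos (mul_pos hy0 hxys0) hπ, hx]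
  have h2 : ‖K (x - y)‖ = (2 * Real.pi * ‖x - y‖)⁻¹ := norm_K _ hxyne
  have h3 : (2 * Real.pi * ‖x - y‖)⁻¹ ≤ (1/2) * (1 / ‖x - y‖) := by
    rw [show (1:ℝ)/2 * (1 / ‖x - y‖) = (2 * ‖x - y‖)⁻¹ by rw [mul_inv]; ring]
    apply inv_anti₀ (by positivity)
    nlinarith
  constructor
  · calc ‖K (x - ys) - K x‖ ≤ (2 * Real.pi * ‖x - y‖)⁻¹ := h1
      _ ≤ (1/2) * (1 / ‖x - y‖) := h3
      _ ≤ 1 / ‖x - y‖ := by nlinarith [one_div_pos.mpr hxy0]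
  · have e : K (x - y) - K (x - ys) + K x = K (x - y) - (K (x - ys) - K x) := by abel
    calc ‖K (x - y) - K (x - ys) + K x‖
        = ‖K (x - y) - (K (x - ys) - K x)‖ := by rw [e]
      _ ≤ ‖K (x - y)‖ + ‖K (x - ys) - K x‖ := norm_sub_le _ _
      _ ≤ (2 * Real.pi * ‖x - y‖)⁻¹ + (2 * Real.pi * ‖x - y‖)⁻¹ := by
          rw [h2]; exact add_le_add_right h1 _
      _ ≤ (1/2) * (1 / ‖x - y‖) + (1/2) * (1 / ‖x - y‖) := add_le_add h3 h3
      _ = 1 / ‖x - y‖ := by ring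

end
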